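/- The sigma function is a theta function for the lattice Λ = 2πiℤ + 2πiτℤ with γ(2πi(a + bτ)) = −b and c(λ) = 1 if λ ∈ 2Λ and c(λ) = −1 otherwise; explicitly, for all a, b ∈ ℤ and all z ∈ ℂ, σ(z + 2πi·(a + b·τ)) = (−1)^{a + b + a·b} · exp(−b·(z + πi·(a + b·τ))) · σ(z). -/

import Mathlib

open Complex Filter Topology Finset

/-- The nome `q = exp(2πiτ)`. -/
noncomputable def nome (τ : ℂ) : ℂ := Complex.exp (2 * Real.pi * Complex.I * τ)

private lemma hasProd_zero_of_zero {f : ℕ → ℂ} {i : ℕ} (h : f i = 0) : HasProd f 0 := by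
  have hev : ∀ᶠ s : Finset ℕ in atTop, (0 : ℂ) = ∏ n ∈ s, f n := by
    filter_upwards [Filter.eventually_ge_atTop ({i} : Finset ℕ)] with s hs
    exact (Finset.prod_eq_zero (hs (Finset.mem_singleton_self i)) h).symm
  exact tendsto_const_nhds.congr' hev

private lemma tprod_zero_of_zero {f : ℕ → ℂ} {i : ℕ} (h : f i = 0) : ∏' n, f n = 0 :=
  (hasProd_zero_of_zero h).tprod_eq

private lemma multipliable_of_summable_sub_one {f : ℕ → ℂ}
    (h : Summable fun n => f n - 1) : Multipliable f := by
  by_cases h0 : ∃ i, f i = 0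
  · obtain ⟨i, hi⟩ := h0; exact ⟨0, hasProd_zero_of_zero hi⟩
  push_neg at h0
  have hlog : Summable fun n => Complex.log (f n) := by
    have hev : ∀ᶠ n : ℕ in atTop, ‖Complex.log (f n)‖ ≤ 3/2 * ‖f n - 1‖ := by
      filter_upwards [h.tendsto_atTop_zero.eventually
        (Metric.ball_mem_nhds 0 (by norm_num : (0:ℝ) < 1/2))] with n hn
      have hb : ‖f n - 1‖ ≤ 1/2 := by
        simpa [Metric.mem_ball] using hn.le
      have := Complex.norm_log_one_add_half_le_self hb
      simpa using this
    exact Summable.of_norm_bounded_eventually_nat (h.norm.mul_left (3/2)) hev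
  exact Complex.multipliable_of_summable_log hlog


private noncomputable def wfac (τ z : ℂ) (n : ℕ) : ℂ :=
  (1 - nome τ ^ (n + 1) * Complex.exp z) *
    (1 - nome τ ^ (n + 1) * Complex.exp (-z)) / (1 - nome τ ^ (n + 1)) ^ 2

private lemma norm_nome_lt {τ : ℂ} (hτ : 0 < τ.im) : ‖nome τ‖ < 1 := by
  rw [nome, Complex.norm_exp]
  rw [Real.exp_lt_one_iff]
  have : (2 * Real.pi * Complex.I * τ).re = -(2 * Real.pi * τ.im) := by
    simp [Complex.mul_re, Complex.mul_im]
  rw [this]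
  simp only [neg_lt, neg_zero]
  positivity

private lemma nome_ne_zero (τ : ℂ) : nome τ ≠ 0 := Complex.exp_ne_zero _

private lemma one_sub_nome_pow_ne {τ : ℂ} (hτ : 0 < τ.im) (n : ℕ) :
    (1 : ℂ) - nome τ ^ (n + 1) ≠ 0 := by
  intro h
  have h1 : nome τ ^ (n + 1) = 1 := by linear_combination -h
  have h2 : ‖nome τ ^ (n + 1)‖ < 1 := by
    rw [norm_pow]
    exact pow_lt_one₀ (norm_nonneg _) (norm_nome_lt hτ) (Nat.succ_ne_zero n)
  rw [h1] at h2; simp at h2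

private lemma summable_wfac_sub_one {τ : ℂ} (hτ : 0 < τ.im) (z : ℂ) :
    Summable (fun n => wfac τ z n - 1) := by
  set q := nome τ with hqdef
  set a := Complex.exp z
  set b := Complex.exp (-z)
  have hab : a * b = 1 := by rw [← Complex.exp_add]; simp
  have hr : ‖q‖ < 1 := norm_nome_lt hτ
  have hr0 : (0:ℝ) ≤ ‖q‖ := norm_nonneg _
  have hr1 : (0:ℝ) < 1 - ‖q‖ := by linarith
  have key : ∀ n : ℕ, wfac τ z n - 1 =
      (2 - a - b) * q ^ (n + 1) / (1 - q ^ (n + 1)) ^ 2 := by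
    intro n
    have hd := one_sub_nome_pow_ne hτ n
    rw [wfac]
    rw [div_sub_one (pow_ne_zero 2 hd), div_eq_div_iff (pow_ne_zero 2 hd) (pow_ne_zero 2 hd)]
    linear_combination ((q ^ (n+1))^2 * (1 - q^(n+1))^2) * hab
  apply Summable.of_norm_bounded
    (g := fun n => ((‖2 - a - b‖ / (1 - ‖q‖) ^ 2) * ‖q‖) * ‖q‖ ^ n)
    ((summable_geometric_of_lt_one hr0 hr).mul_left _)
  intro n
  rw [key n, norm_div, norm_mul, norm_pow, norm_pow]
  have hDlow : 1 - ‖q‖ ≤ ‖1 - q ^ (n + 1)‖ := by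
    have h1 : ‖q ^ (n+1)‖ ≤ ‖q‖ := by
      rw [norm_pow]
      exact pow_le_of_le_one hr0 hr.le (Nat.succ_ne_zero n)
    have h2 := norm_sub_norm_le (1 : ℂ) (q ^ (n+1))
    simp only [norm_one] at h2
    linarith
  have := div_le_div₀ (c := ‖2 - a - b‖ * ‖q‖ ^ (n+1)) (d := (1 - ‖q‖)^2)
    (by positivity) le_rfl (by positivity)
    (by
      have := pow_le_pow_left₀ hr1.le hDlow 2
      simpa using this)
  calc ‖2 - a - b‖ * ‖q‖ ^ (n + 1) / ‖1 - q ^ (n + 1)‖ ^ 2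
      ≤ ‖2 - a - b‖ * ‖q‖ ^ (n + 1) / (1 - ‖q‖) ^ 2 := this
    _ = ‖2 - a - b‖ / (1 - ‖q‖) ^ 2 * ‖q‖ * ‖q‖ ^ n := by ring

private lemma multipliable_wfac {τ : ℂ} (hτ : 0 < τ.im) (z : ℂ) :
    Multipliable (wfac τ z) :=
  multipliable_of_summable_sub_one (summable_wfac_sub_one hτ z)

private lemma wfac_shift {τ : ℂ} (hτ : 0 < τ.im) (z : ℂ) (n : ℕ) :
    wfac τ (z + 2 * Real.pi * Complex.I * τ) n =
      (1 - nome τ ^ (n + 2) * Complex.exp z) * (1 - nome τ ^ n * Complex.exp (-z)) /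
        (1 - nome τ ^ (n + 1)) ^ 2 := by
  have h1 : Complex.exp (z + 2 * Real.pi * Complex.I * τ) = Complex.exp z * nome τ := by
    rw [Complex.exp_add, nome]
  have h2 : Complex.exp (-(z + 2 * Real.pi * Complex.I * τ)) =
      Complex.exp (-z) * (nome τ)⁻¹ := by
    rw [neg_add, Complex.exp_add, nome]
    simp [Complex.exp_neg]
  rw [wfac, h1, h2]
  congr 2
  · ring
  · have hq := nome_ne_zero τ
    field_simp
    ring

private lemma tprod_rel {τ : ℂ} (hτ : 0 < τ.im) (z : ℂ) :
    (∏' n, wfac τ (z + 2 * Real.pi * Complex.I * τ) n) * (1 - nome τ * Complex.exp z) =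
      (∏' n, wfac τ z n) * (1 - Complex.exp (-z)) := by
  set q := nome τ with hqdef
  set a := Complex.exp z with hadef
  set b := Complex.exp (-z) with hbdef
  have hfin : ∀ N : ℕ,
      (∏ n ∈ Finset.range N, wfac τ (z + 2 * Real.pi * Complex.I * τ) n) *
          ((1 - q * a) * (1 - q ^ N * b)) =
        (∏ n ∈ Finset.range N, wfac τ z n) * ((1 - q ^ (N + 1) * a) * (1 - b)) := by
    intro N
    induction N with
    | zero => simp [mul_comm]
    | succ N ih =>
      have hd : (1 : ℂ) - q ^ (N + 1) ≠ 0 := one_sub_nome_pow_ne hτ N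
      have key : ∀ P' P : ℂ,
          P' * ((1 - q * a) * (1 - q ^ N * b)) = P * ((1 - q ^ (N + 1) * a) * (1 - b)) →
          P' * ((1 - q ^ (N + 2) * a) * (1 - q ^ N * b) / (1 - q ^ (N + 1)) ^ 2) *
              ((1 - q * a) * (1 - q ^ (N + 1) * b)) =
            P * ((1 - q ^ (N + 1) * a) * (1 - q ^ (N + 1) * b) / (1 - q ^ (N + 1)) ^ 2) *
              ((1 - q ^ (N + 2) * a) * (1 - b)) := by
        intro P' P h
        field_simp
        linear_combination ((1 - q ^ (N + 2) * a) * (1 - q ^ (N + 1) * b)) * h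
      rw [Finset.prod_range_succ, Finset.prod_range_succ, wfac_shift hτ, wfac]
      exact key _ _ ih
  have tq : Tendsto (fun N : ℕ => q ^ N) atTop (𝓝 0) :=
    tendsto_pow_atTop_nhds_zero_of_norm_lt_one (norm_nome_lt hτ)
  have tq1 : Tendsto (fun N : ℕ => q ^ (N + 1)) atTop (𝓝 0) :=
    tq.comp (tendsto_add_atTop_nat 1)
  have t1 := (multipliable_wfac hτ (z + 2 * Real.pi * Complex.I * τ)).hasProd.tendsto_prod_nat
  have t2 := (multipliable_wfac hτ z).hasProd.tendsto_prod_nat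
  have L1 : Tendsto (fun N : ℕ =>
      (∏ n ∈ Finset.range N, wfac τ (z + 2 * Real.pi * Complex.I * τ) n) *
        ((1 - q * a) * (1 - q ^ N * b))) atTop
      (𝓝 ((∏' n, wfac τ (z + 2 * Real.pi * Complex.I * τ) n) * ((1 - q * a) * (1 - 0 * b)))) :=
    t1.mul (tendsto_const_nhds.mul (tendsto_const_nhds.sub (tq.mul_const b)))
  have L2 : Tendsto (fun N : ℕ =>
      (∏ n ∈ Finset.range N, wfac τ z n) * ((1 - q ^ (N + 1) * a) * (1 - b))) atTop
      (𝓝 ((∏' n, wfac τ z n) * ((1 - 0 * a) * (1 - b)))) :=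
    t2.mul ((tendsto_const_nhds.sub (tq1.mul_const a)).mul tendsto_const_nhds)
  have := tendsto_nhds_unique (L1.congr hfin) L2
  simpa using this

/-- The Weierstrass-type sigma function
`σ(z) = (e^{z/2} - e^{-z/2}) ∏_{n ≥ 1} (1 - qⁿ eᶻ)(1 - qⁿ e^{-z})/(1 - qⁿ)²`,
where the product over integers `n ≥ 1` is encoded as a product over `n : ℕ`
with exponent `n + 1`. -/
noncomputable def wsigma (τ : ℂ) (z : ℂ) : ℂ :=
  (Complex.exp (z / 2) - Complex.exp (-z / 2)) *
    ∏' n : ℕ, ((1 - nome τ ^ (n + 1) * Complex.exp z) *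
      (1 - nome τ ^ (n + 1) * Complex.exp (-z)) / (1 - nome τ ^ (n + 1)) ^ 2)

private lemma wsigma_eq (τ z : ℂ) :
    wsigma τ z = (Complex.exp (z / 2) - Complex.exp (-z / 2)) * ∏' n, wfac τ z n := rfl

private lemma step_one (τ z : ℂ) :
    wsigma τ (z + 2 * Real.pi * Complex.I) = -wsigma τ z := by
  rw [wsigma_eq, wsigma_eq]
  have hP : ∀ n, wfac τ (z + 2 * Real.pi * Complex.I) n = wfac τ z n := by
    intro n
    rw [wfac, wfac, Complex.exp_add, Complex.exp_two_pi_mul_I, mul_one,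
      neg_add, Complex.exp_add]
    rw [show Complex.exp (-(2 * Real.pi * Complex.I)) = 1 by
      rw [Complex.exp_neg, Complex.exp_two_pi_mul_I, inv_one], mul_one]
  rw [tprod_congr hP]
  have e1 : Complex.exp ((z + 2 * Real.pi * Complex.I) / 2) = -Complex.exp (z / 2) := by
    rw [show (z + 2 * Real.pi * Complex.I) / 2 = z / 2 + Real.pi * Complex.I by ring,
      Complex.exp_add, Complex.exp_pi_mul_I]
    ring
  have e2 : Complex.exp (-(z + 2 * Real.pi * Complex.I) / 2) = -Complex.exp (-z / 2) := by
    rw [show -(z + 2 * Real.pi * Complex.I) / 2 = -z / 2 + -(Real.pi * Complex.I) by ring,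
      Complex.exp_add, Complex.exp_neg, Complex.exp_pi_mul_I]
    ring
  rw [e1, e2]
  ring

private lemma step_tau {τ : ℂ} (hτ : 0 < τ.im) (z : ℂ) :
    wsigma τ (z + 2 * Real.pi * Complex.I * τ) =
      -Complex.exp (-(z + Real.pi * Complex.I * τ)) * wsigma τ z := by
  set u := Complex.exp (z / 2) with hudef
  set s := Complex.exp (Real.pi * Complex.I * τ) with hsdef
  have hu0 : u ≠ 0 := Complex.exp_ne_zero _
  have hs0 : s ≠ 0 := Complex.exp_ne_zero _
  have hq : nome τ = s * s := by
    rw [nome, hsdef, ← Complex.exp_add]; congr 1; ring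
  have ha : Complex.exp z = u * u := by
    rw [hudef, ← Complex.exp_add]; congr 1; ring
  have hb : Complex.exp (-z) = (u * u)⁻¹ := by rw [Complex.exp_neg, ha]
  have e1 : Complex.exp ((z + 2 * Real.pi * Complex.I * τ) / 2) = u * s := by
    rw [hudef, hsdef, ← Complex.exp_add]; congr 1; ring
  have e2 : Complex.exp (-(z + 2 * Real.pi * Complex.I * τ) / 2) = u⁻¹ * s⁻¹ := by
    rw [show -(z + 2 * Real.pi * Complex.I * τ) / 2 =
      -((z + 2 * Real.pi * Complex.I * τ) / 2) by ring, Complex.exp_neg, e1, mul_inv]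
  have e3 : Complex.exp (-(z + Real.pi * Complex.I * τ)) = (u * u * s)⁻¹ := by
    rw [Complex.exp_neg, show z + Real.pi * Complex.I * τ =
      (z / 2 + z / 2) + Real.pi * Complex.I * τ by ring, Complex.exp_add, Complex.exp_add,
      ← hudef, ← hsdef]
  have e4 : Complex.exp (-z / 2) = u⁻¹ := by
    rw [show (-z / 2 : ℂ) = -(z / 2) by ring, Complex.exp_neg, hudef]
  have K := tprod_rel hτ z
  rw [wsigma_eq, wsigma_eq, e1, e2, e3, e4]
  by_cases hc : (1 : ℂ) - nome τ * Complex.exp z ≠ 0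
  · apply mul_right_cancel₀ hc
    rw [mul_assoc, K, hq, ha, hb]
    field_simp
    ring
  · push_neg at hc
    have hP : (∏' n, wfac τ z n) = 0 := by
      apply tprod_zero_of_zero (i := 0)
      rw [wfac, pow_one]
      rw [hc]
      simp
    have hsu : u * s - u⁻¹ * s⁻¹ = 0 := by
      have h1 : s * s * (u * u) = 1 := by
        rw [← hq, ← ha]; linear_combination -hc
      field_simp
      linear_combination h1
    rw [hP, hsu]
    ring


private lemma neg_one_zpow_ne (n : ℤ) : ((-1 : ℂ) ^ n) ≠ 0 := zpow_ne_zero n (by norm_num)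

private lemma step_int (τ : ℂ) : ∀ (a : ℤ) (z : ℂ),
    wsigma τ (z + 2 * Real.pi * Complex.I * a) = (-1 : ℂ) ^ a * wsigma τ z := by
  intro a
  induction a using Int.induction_on with
  | zero => intro z; simp
  | succ k ih =>
    intro z
    have h := step_one τ (z + 2 * Real.pi * Complex.I * (k : ℂ))
    have ih' := ih z
    push_cast at ih' ⊢
    rw [show z + 2 * Real.pi * Complex.I * ((k : ℂ) + 1) =
      z + 2 * Real.pi * Complex.I * (k : ℂ) + 2 * Real.pi * Complex.I by ring,
      h, ih', zpow_add₀ (by norm_num : (-1 : ℂ) ≠ 0), zpow_one]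
    ring
  | pred k ih =>
    intro z
    have h := step_one τ (z + 2 * Real.pi * Complex.I * (-(k : ℤ) - 1 : ℤ))
    rw [show z + 2 * Real.pi * Complex.I * (-(k : ℤ) - 1 : ℤ) + 2 * Real.pi * Complex.I =
      z + 2 * Real.pi * Complex.I * (-(k : ℤ) : ℤ) by push_cast; ring, ih z] at h
    rw [show (-(k : ℤ) - 1 : ℤ) = (-(k : ℤ)) + (-1) from by ring,
      zpow_add₀ (by norm_num : (-1 : ℂ) ≠ 0), zpow_neg_one, inv_neg_one]
    push_cast at h ⊢
    linear_combination h

private lemma step_tau_back {τ : ℂ} (hτ : 0 < τ.im) (w : ℂ) :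
    wsigma τ (w - 2 * Real.pi * Complex.I * τ) =
      -Complex.exp (w - Real.pi * Complex.I * τ) * wsigma τ w := by
  have h := step_tau hτ (w - 2 * Real.pi * Complex.I * τ)
  rw [show w - 2 * Real.pi * Complex.I * τ + 2 * Real.pi * Complex.I * τ = w by ring] at h
  rw [h, show -Complex.exp (w - Real.pi * Complex.I * τ) *
      (-Complex.exp (-(w - 2 * Real.pi * Complex.I * τ + Real.pi * Complex.I * τ)) *
        wsigma τ (w - 2 * Real.pi * Complex.I * τ)) =
    (Complex.exp (w - Real.pi * Complex.I * τ) *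
      Complex.exp (-(w - 2 * Real.pi * Complex.I * τ + Real.pi * Complex.I * τ))) *
        wsigma τ (w - 2 * Real.pi * Complex.I * τ) by ring, ← Complex.exp_add,
    show (w - Real.pi * Complex.I * τ) +
      -(w - 2 * Real.pi * Complex.I * τ + Real.pi * Complex.I * τ) = 0 by ring,
    Complex.exp_zero, one_mul]

private lemma step_tau_int {τ : ℂ} (hτ : 0 < τ.im) : ∀ (b : ℤ) (z : ℂ),
    wsigma τ (z + 2 * Real.pi * Complex.I * b * τ) =
      (-1 : ℂ) ^ b * Complex.exp (-(b : ℂ) * (z + Real.pi * Complex.I * b * τ)) *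
        wsigma τ z := by
  intro b
  induction b using Int.induction_on with
  | zero => intro z; simp
  | succ k ih =>
    intro z
    have h := ih (z + 2 * Real.pi * Complex.I * τ)
    rw [show z + 2 * Real.pi * Complex.I * τ + 2 * Real.pi * Complex.I * (k : ℤ) * τ =
      z + 2 * Real.pi * Complex.I * ((k : ℤ) + 1 : ℤ) * τ by push_cast; ring,
      step_tau hτ z] at h
    rw [h, zpow_add₀ (by norm_num : (-1 : ℂ) ≠ 0), zpow_one]
    have hexp : Complex.exp (-(k : ℂ) * (z + 2 * Real.pi * Complex.I * τ +
          Real.pi * Complex.I * (k : ℤ) * τ)) * Complex.exp (-(z + Real.pi * Complex.I * τ)) =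
        Complex.exp (-((k : ℤ) + 1 : ℤ) * (z + Real.pi * Complex.I * ((k : ℤ) + 1 : ℤ) * τ)) := by
      rw [← Complex.exp_add]; congr 1; push_cast; ring
    push_cast at hexp ⊢
    linear_combination (-(-1 : ℂ) ^ (k : ℤ) * wsigma τ z) * hexp
  | pred k ih =>
    intro z
    have h := step_tau_back hτ (z + 2 * Real.pi * Complex.I * (-(k : ℤ) : ℤ) * τ)
    rw [show z + 2 * Real.pi * Complex.I * (-(k : ℤ) : ℤ) * τ - 2 * Real.pi * Complex.I * τ =
      z + 2 * Real.pi * Complex.I * (-(k : ℤ) - 1 : ℤ) * τ by push_cast; ring, ih z] at h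
    rw [h, show (-(k : ℤ) - 1 : ℤ) = (-(k : ℤ)) + (-1) from by ring,
      zpow_add₀ (by norm_num : (-1 : ℂ) ≠ 0), zpow_neg_one, inv_neg_one]
    have hexp : Complex.exp (z + 2 * Real.pi * Complex.I * (-(k : ℤ) : ℤ) * τ -
          Real.pi * Complex.I * τ) *
        Complex.exp (-(-(k : ℤ) : ℂ) * (z + Real.pi * Complex.I * (-(k : ℤ) : ℤ) * τ)) =
        Complex.exp (-((-(k : ℤ) : ℤ) + (-1) : ℤ) *
          (z + Real.pi * Complex.I * ((-(k : ℤ) : ℤ) + (-1) : ℤ) * τ)) := by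
      rw [← Complex.exp_add]; congr 1; push_cast; ring
    push_cast at hexp ⊢
    linear_combination (-(-1 : ℂ) ^ (-(k : ℤ)) * wsigma τ z) * hexp

theorem wsigma_theta_transformation (τ : ℂ) (hτ : 0 < τ.im) :
    ∀ (a b : ℤ) (z : ℂ),
      wsigma τ (z + 2 * Real.pi * Complex.I * (a + b * τ)) =
        (-1 : ℂ) ^ (a + b + a * b) *
          Complex.exp (-b * (z + Real.pi * Complex.I * (a + b * τ))) * wsigma τ z := by
  intro a b z
  have h1 : z + 2 * Real.pi * Complex.I * ((a : ℂ) + (b : ℂ) * τ) =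
      (z + 2 * Real.pi * Complex.I * (b : ℂ) * τ) + 2 * Real.pi * Complex.I * (a : ℂ) := by
    ring
  have hb := step_tau_int hτ b z
  have ha := step_int τ a (z + 2 * Real.pi * Complex.I * (b : ℂ) * τ)
  push_cast at hb ha ⊢
  rw [h1, ha, hb]
  have hmone : ((-1 : ℂ)) ≠ 0 := by norm_num
  rw [zpow_add₀ hmone, zpow_add₀ hmone]
  have hexp : Complex.exp (-(b : ℂ) * (z + Real.pi * Complex.I * ((a : ℂ) + (b : ℂ) * τ))) =
      Complex.exp (((-(a * b) : ℤ) : ℂ) * (Real.pi * Complex.I)) *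
        Complex.exp (-(b : ℂ) * (z + Real.pi * Complex.I * (b : ℂ) * τ)) := by
    rw [← Complex.exp_add]; congr 1; push_cast; ring
  rw [hexp, Complex.exp_int_mul, Complex.exp_pi_mul_I, zpow_neg]
  have hcancel : (-1 : ℂ) ^ (a * b) * ((-1 : ℂ) ^ (a * b))⁻¹ = 1 :=
    mul_inv_cancel₀ (neg_one_zpow_ne _)
  linear_combination (-(Complex.exp (-(b : ℂ) * (z + Real.pi * Complex.I * (b : ℂ) * τ)) *
    wsigma τ z * (-1 : ℂ) ^ a * (-1 : ℂ) ^ b)) * hcancel
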